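/- Let ℍ be the algebra of quaternions and for z ∈ ℍ write Re(z) for its real part (viewed as a quaternion) and Im(z) := z − Re(z) for its imaginary part. Fix v ∈ ℍ. Then the graded real vector space ℍ ⊕ ℍ (with L₀ = ℍ and L₁ = ℍ), together with the differential d := Re : ℍ → ℍ, the bracket given on L₀×L₀ by [a,c] := Im(Im(a)Im(c)) and on L₀×L₁ by [a,b] := Im(Im(a)Im(b)), and the alternating trilinear Jacobiator J : ℍ×ℍ×ℍ → ℍ determined on the basis 1, i, j, k by J(1,i,j) = J(1,i,k) = J(1,j,k) = 0 and J(i,j,k) = Im(v), is a 2-term L∞-algebra over ℝ. -/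

import Mathlib

open Function

/-- The data `(d, b0, b1, J)` on the graded vector space `L0 ⊕ L1` forms a 2-term
L∞-algebra.  Here `b0` is the bracket `L0 × L0 → L0`, `b1` is the bracket
`L0 × L1 → L1` (with the convention `[v,x] := -[x,v] = - b1 x v` for `v : L1`, `x : L0`),
and `J` is the Jacobiator. -/
structure IsTwoTerm (k : Type*) [Field k]
    (L0 : Type*) [AddCommGroup L0] [Module k L0]
    (L1 : Type*) [AddCommGroup L1] [Module k L1]
    (d : L1 → L0) (b0 : L0 → L0 → L0) (b1 : L0 → L1 → L1)
    (J : L0 → L0 → L0 → L1) : Prop where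
  d_lin : IsLinearMap k d
  b0_lin_left : ∀ y, IsLinearMap k fun x => b0 x y
  b0_lin_right : ∀ x, IsLinearMap k fun y => b0 x y
  b0_antisymm : ∀ x y, b0 x y = - b0 y x
  b1_lin_left : ∀ v, IsLinearMap k fun x => b1 x v
  b1_lin_right : ∀ x, IsLinearMap k fun v => b1 x v
  J_lin₁ : ∀ y z, IsLinearMap k fun x => J x y z
  J_lin₂ : ∀ x z, IsLinearMap k fun y => J x y z
  J_lin₃ : ∀ x y, IsLinearMap k fun z => J x y z
  J_alt₁ : ∀ x z, J x x z = 0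
  J_alt₂ : ∀ x y, J x y y = 0
  ident₁ : ∀ x v, d (b1 x v) = b0 x (d v)
  ident₂ : ∀ u v, b1 (d u) v = - b1 (d v) u
  ident₃ : ∀ x y z, d (J x y z) = b0 x (b0 y z) - b0 (b0 x y) z - b0 y (b0 x z)
  ident₄ : ∀ v y z, J (d v) y z = - b1 (b0 y z) v - b1 z (b1 y v) + b1 y (b1 z v)
  ident₅ : ∀ x₁ x₂ x₃ x₄,
    b1 x₁ (J x₂ x₃ x₄) - b1 x₂ (J x₁ x₃ x₄) + b1 x₃ (J x₁ x₂ x₄) - b1 x₄ (J x₁ x₂ x₃)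
      - (J (b0 x₁ x₂) x₃ x₄ - J (b0 x₁ x₃) x₂ x₄ + J (b0 x₁ x₄) x₂ x₃
        + J (b0 x₂ x₃) x₁ x₄ - J (b0 x₂ x₄) x₁ x₃ + J (b0 x₃ x₄) x₁ x₂) = 0

/-- `(φ0, φ1, Φ)` is a morphism of 2-term L∞-algebras from `(L0 ⊕ L1, d, b0, b1, J)`
to `(M0 ⊕ M1, d', b0', b1', J')`.  `Φ` is a linear map on `L0 ∧ L0`, encoded as an
antisymmetric bilinear map. -/
structure IsMorphism (k : Type*) [Field k]
    (L0 : Type*) [AddCommGroup L0] [Module k L0]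
    (L1 : Type*) [AddCommGroup L1] [Module k L1]
    (M0 : Type*) [AddCommGroup M0] [Module k M0]
    (M1 : Type*) [AddCommGroup M1] [Module k M1]
    (d : L1 → L0) (b0 : L0 → L0 → L0) (b1 : L0 → L1 → L1) (J : L0 → L0 → L0 → L1)
    (d' : M1 → M0) (b0' : M0 → M0 → M0) (b1' : M0 → M1 → M1) (J' : M0 → M0 → M0 → M1)
    (φ0 : L0 → M0) (φ1 : L1 → M1) (Φ : L0 → L0 → M1) : Prop where
  φ0_lin : IsLinearMap k φ0
  φ1_lin : IsLinearMap k φ1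
  Φ_lin_left : ∀ y, IsLinearMap k fun x => Φ x y
  Φ_lin_right : ∀ x, IsLinearMap k fun y => Φ x y
  Φ_alt : ∀ x, Φ x x = 0
  compat_d : ∀ v, φ0 (d v) = d' (φ1 v)
  compat_b0 : ∀ x y, d' (Φ x y) = φ0 (b0 x y) - b0' (φ0 x) (φ0 y)
  compat_b1 : ∀ v y, Φ (d v) y = - φ1 (b1 y v) + b1' (φ0 y) (φ1 v)
  compat_J : ∀ x₁ x₂ x₃,
    φ1 (J x₁ x₂ x₃) - J' (φ0 x₁) (φ0 x₂) (φ0 x₃)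
      = b1' (φ0 x₁) (Φ x₂ x₃) - b1' (φ0 x₂) (Φ x₁ x₃) + b1' (φ0 x₃) (Φ x₁ x₂)
        + Φ x₁ (b0 x₂ x₃) - Φ x₂ (b0 x₁ x₃) + Φ x₃ (b0 x₁ x₂)

/-- The real part of a quaternion, viewed as a quaternion. -/
noncomputable def qRe (z : Quaternion ℝ) : Quaternion ℝ := ((z.re : ℝ) : Quaternion ℝ)

/-- The imaginary part of a quaternion: `Im(z) := z - Re(z)`. -/
noncomputable def qIm (z : Quaternion ℝ) : Quaternion ℝ := z - qRe z

/-- The bracket `[a,c] := Im(Im(a)·Im(c))` of the quaternionic 2-term L∞-algebra. -/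
noncomputable def qBr (a c : Quaternion ℝ) : Quaternion ℝ := qIm (qIm a * qIm c)

/-- The imaginary units of `ℍ`. -/
noncomputable def qI : Quaternion ℝ := ⟨0, 1, 0, 0⟩
noncomputable def qJ : Quaternion ℝ := ⟨0, 0, 1, 0⟩
noncomputable def qK : Quaternion ℝ := ⟨0, 0, 0, 1⟩


@[ext]
lemma qext (a b : Quaternion ℝ) (h1 : a.re = b.re) (h2 : a.imI = b.imI) (h3 : a.imJ = b.imJ)
    (h4 : a.imK = b.imK) : a = b :=
  QuaternionAlgebra.ext h1 h2 h3 h4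

@[simp] lemma q_re_add (a b : Quaternion ℝ) : (a + b).re = a.re + b.re := rfl
@[simp] lemma q_re_sub (a b : Quaternion ℝ) : (a - b).re = a.re - b.re := rfl
@[simp] lemma q_re_neg (a : Quaternion ℝ) : (-a).re = -a.re := rfl
@[simp] lemma q_re_smul (r : ℝ) (a : Quaternion ℝ) : (r • a).re = r * a.re := rfl
@[simp] lemma q_re_zero : (0 : Quaternion ℝ).re = 0 := rfl

@[simp] lemma q_imI_add (a b : Quaternion ℝ) : (a + b).imI = a.imI + b.imI := rfl
@[simp] lemma q_imI_sub (a b : Quaternion ℝ) : (a - b).imI = a.imI - b.imI := rfl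
@[simp] lemma q_imI_neg (a : Quaternion ℝ) : (-a).imI = -a.imI := rfl
@[simp] lemma q_imI_smul (r : ℝ) (a : Quaternion ℝ) : (r • a).imI = r * a.imI := rfl
@[simp] lemma q_imI_zero : (0 : Quaternion ℝ).imI = 0 := rfl

@[simp] lemma q_imJ_add (a b : Quaternion ℝ) : (a + b).imJ = a.imJ + b.imJ := rfl
@[simp] lemma q_imJ_sub (a b : Quaternion ℝ) : (a - b).imJ = a.imJ - b.imJ := rfl
@[simp] lemma q_imJ_neg (a : Quaternion ℝ) : (-a).imJ = -a.imJ := rfl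
@[simp] lemma q_imJ_smul (r : ℝ) (a : Quaternion ℝ) : (r • a).imJ = r * a.imJ := rfl
@[simp] lemma q_imJ_zero : (0 : Quaternion ℝ).imJ = 0 := rfl

@[simp] lemma q_imK_add (a b : Quaternion ℝ) : (a + b).imK = a.imK + b.imK := rfl
@[simp] lemma q_imK_sub (a b : Quaternion ℝ) : (a - b).imK = a.imK - b.imK := rfl
@[simp] lemma q_imK_neg (a : Quaternion ℝ) : (-a).imK = -a.imK := rfl
@[simp] lemma q_imK_smul (r : ℝ) (a : Quaternion ℝ) : (r • a).imK = r * a.imK := rfl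
@[simp] lemma q_imK_zero : (0 : Quaternion ℝ).imK = 0 := rfl

@[simp] lemma q_re_one : (1 : Quaternion ℝ).re = 1 := rfl
@[simp] lemma q_imI_one : (1 : Quaternion ℝ).imI = 0 := rfl
@[simp] lemma q_imJ_one : (1 : Quaternion ℝ).imJ = 0 := rfl
@[simp] lemma q_imK_one : (1 : Quaternion ℝ).imK = 0 := rfl


/-- A quaternion from its four components, with type `Quaternion ℝ`. -/
noncomputable def qmk (a b c d : ℝ) : Quaternion ℝ := ⟨a, b, c, d⟩

@[simp] lemma qmk_re (a b c d : ℝ) : (qmk a b c d).re = a := rfl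
@[simp] lemma qmk_imI (a b c d : ℝ) : (qmk a b c d).imI = b := rfl
@[simp] lemma qmk_imJ (a b c d : ℝ) : (qmk a b c d).imJ = c := rfl
@[simp] lemma qmk_imK (a b c d : ℝ) : (qmk a b c d).imK = d := rfl

lemma qBr_mk (a c : Quaternion ℝ) : qBr a c =
    qmk 0 (a.imJ*c.imK - a.imK*c.imJ) (a.imK*c.imI - a.imI*c.imK) (a.imI*c.imJ - a.imJ*c.imI) := by
  ext <;> simp [qBr, qIm, qRe, Quaternion.re_mul, Quaternion.imI_mul, Quaternion.imJ_mul,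
    Quaternion.imK_mul, Quaternion.re_coe, Quaternion.imI_coe, Quaternion.imJ_coe,
    Quaternion.imK_coe] <;> ring

lemma qRe_mk (z : Quaternion ℝ) : qRe z = qmk z.re 0 0 0 := by
  ext <;> simp [qRe, Quaternion.re_coe, Quaternion.imI_coe, Quaternion.imJ_coe,
    Quaternion.imK_coe]

lemma qIm_mk (z : Quaternion ℝ) : qIm z = qmk 0 z.imI z.imJ z.imK := by
  ext <;> simp [qIm, qRe_mk]

lemma qdecomp (x : Quaternion ℝ) : x = x.re • 1 + x.imI • qI + x.imJ • qJ + x.imK • qK := by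
  ext <;> simp <;> simp [qI, qJ, qK]

/-- Example 1 of the paper: the quaternionic 2-term L∞-algebra
`ℍ ⊕ ℍ`, with `d = Re`, brackets `[a,c] = Im(Im(a)·Im(c))` (in both degrees), and the
alternating trilinear Jacobiator `J` determined on the standard basis `1, i, j, k` by
`J(1,i,j) = J(1,i,k) = J(1,j,k) = 0` and `J(i,j,k) = Im(v)` (for a fixed `v ∈ ℍ`), is a
2-term L∞-algebra over `ℝ`. -/
theorem stmt14 (v : Quaternion ℝ)
    (J : Quaternion ℝ → Quaternion ℝ → Quaternion ℝ → Quaternion ℝ)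
    (hJ_lin₁ : ∀ y z, IsLinearMap ℝ fun x => J x y z)
    (hJ_lin₂ : ∀ x z, IsLinearMap ℝ fun y => J x y z)
    (hJ_lin₃ : ∀ x y, IsLinearMap ℝ fun z => J x y z)
    (hJ_alt₁ : ∀ x z, J x x z = 0)
    (hJ_alt₂ : ∀ x y, J x y y = 0)
    (hJ1ij : J 1 qI qJ = 0)
    (hJ1ik : J 1 qI qK = 0)
    (hJ1jk : J 1 qJ qK = 0)
    (hJijk : J qI qJ qK = qIm v) :
    IsTwoTerm ℝ (Quaternion ℝ) (Quaternion ℝ) qRe qBr qBr J := by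
  have Ja1 : ∀ a b y z, J (a+b) y z = J a y z + J b y z := fun a b y z => (hJ_lin₁ y z).map_add a b
  have Js1 : ∀ (r:ℝ) a y z, J (r•a) y z = r • J a y z := fun r a y z => (hJ_lin₁ y z).map_smul r a
  have Ja2 : ∀ x a b z, J x (a+b) z = J x a z + J x b z := fun x a b z => (hJ_lin₂ x z).map_add a b
  have Js2 : ∀ (r:ℝ) x a z, J x (r•a) z = r • J x a z := fun r x a z => (hJ_lin₂ x z).map_smul r a
  have Ja3 : ∀ x y a b, J x y (a+b) = J x y a + J x y b := fun x y a b => (hJ_lin₃ x y).map_add a b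
  have Js3 : ∀ (r:ℝ) x y a, J x y (r•a) = r • J x y a := fun r x y a => (hJ_lin₃ x y).map_smul r a
  have sw12 : ∀ x y z, J y x z = - J x y z := by
    intro x y z
    have h := hJ_alt₁ (x+y) z
    rw [Ja1, Ja2, Ja2, hJ_alt₁, hJ_alt₁, zero_add, add_zero] at h
    rw [eq_neg_iff_add_eq_zero, add_comm]
    exact h
  have sw23 : ∀ x y z, J x z y = - J x y z := by
    intro x y z
    have h := hJ_alt₂ x (y+z)
    rw [Ja2, Ja3, Ja3, hJ_alt₂, hJ_alt₂, zero_add, add_zero] at h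
    rw [eq_neg_iff_add_eq_zero, add_comm]
    exact h
  have hrep13 : ∀ x y, J x y x = 0 := by
    intro x y
    rw [sw23 x x y, hJ_alt₁, neg_zero]
  have h1ji : J 1 qJ qI = 0 := by rw [sw23 1 qI qJ, hJ1ij, neg_zero]
  have h1ki : J 1 qK qI = 0 := by rw [sw23 1 qI qK, hJ1ik, neg_zero]
  have h1kj : J 1 qK qJ = 0 := by rw [sw23 1 qJ qK, hJ1jk, neg_zero]
  have hi1j : J qI 1 qJ = 0 := by rw [sw12 1 qI qJ, hJ1ij, neg_zero]
  have hi1k : J qI 1 qK = 0 := by rw [sw12 1 qI qK, hJ1ik, neg_zero]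
  have hj1i : J qJ 1 qI = 0 := by rw [sw12 1 qJ qI, h1ji, neg_zero]
  have hj1k : J qJ 1 qK = 0 := by rw [sw12 1 qJ qK, hJ1jk, neg_zero]
  have hk1i : J qK 1 qI = 0 := by rw [sw12 1 qK qI, h1ki, neg_zero]
  have hk1j : J qK 1 qJ = 0 := by rw [sw12 1 qK qJ, h1kj, neg_zero]
  have hij1 : J qI qJ 1 = 0 := by rw [sw23 qI 1 qJ, hi1j, neg_zero]
  have hik1 : J qI qK 1 = 0 := by rw [sw23 qI 1 qK, hi1k, neg_zero]
  have hji1 : J qJ qI 1 = 0 := by rw [sw23 qJ 1 qI, hj1i, neg_zero]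
  have hjk1 : J qJ qK 1 = 0 := by rw [sw23 qJ 1 qK, hj1k, neg_zero]
  have hki1 : J qK qI 1 = 0 := by rw [sw23 qK 1 qI, hk1i, neg_zero]
  have hkj1 : J qK qJ 1 = 0 := by rw [sw23 qK 1 qJ, hk1j, neg_zero]
  have hikj : J qI qK qJ = -qIm v := by rw [sw23 qI qJ qK, hJijk]
  have hjik : J qJ qI qK = -qIm v := by rw [sw12 qI qJ qK, hJijk]
  have hjki : J qJ qK qI = qIm v := by rw [sw23 qJ qI qK, hjik, neg_neg]
  have hkij : J qK qI qJ = qIm v := by rw [sw12 qI qK qJ, hikj, neg_neg]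
  have hkji : J qK qJ qI = -qIm v := by rw [sw12 qJ qK qI, hjki]
  have Jform : ∀ x y z, J x y z =
      (x.imI*(y.imJ*z.imK - y.imK*z.imJ) - x.imJ*(y.imI*z.imK - y.imK*z.imI)
        + x.imK*(y.imI*z.imJ - y.imJ*z.imI)) • qIm v := by
    intro x y z
    conv_lhs => rw [qdecomp x, qdecomp y, qdecomp z]
    simp only [Ja1, Js1, Ja2, Js2, Ja3, Js3, hJ_alt₁, hJ_alt₂, hrep13,
      hJ1ij, hJ1ik, hJ1jk, h1ji, h1ki, h1kj, hi1j, hi1k, hj1i, hj1k, hk1i, hk1j,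
      hij1, hik1, hji1, hjk1, hki1, hkj1, hJijk, hikj, hjik, hjki, hkij, hkji,
      smul_zero, add_zero, zero_add, smul_neg, smul_smul]
    module
  refine ⟨?_, ?_, ?_, ?_, ?_, ?_, hJ_lin₁, hJ_lin₂, hJ_lin₃, hJ_alt₁, hJ_alt₂,
    ?_, ?_, ?_, ?_, ?_⟩
  · exact ⟨fun a b => by ext <;> simp [qRe_mk], fun r a => by ext <;> simp [qRe_mk]⟩
  · exact fun y => ⟨fun a b => by ext <;> simp [qBr_mk] <;> ring,
      fun r a => by ext <;> simp [qBr_mk] <;> ring⟩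
  · exact fun x => ⟨fun a b => by ext <;> simp [qBr_mk] <;> ring,
      fun r a => by ext <;> simp [qBr_mk] <;> ring⟩
  · intro x y; ext <;> simp [qBr_mk] <;> ring
  · exact fun y => ⟨fun a b => by ext <;> simp [qBr_mk] <;> ring,
      fun r a => by ext <;> simp [qBr_mk] <;> ring⟩
  · exact fun x => ⟨fun a b => by ext <;> simp [qBr_mk] <;> ring,
      fun r a => by ext <;> simp [qBr_mk] <;> ring⟩
  · intro x u; ext <;> simp [qBr_mk, qRe_mk] <;> ring
  · intro u w; ext <;> simp [qBr_mk, qRe_mk] <;> ring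
  · intro x y z
    rw [Jform]
    ext <;> simp [qBr_mk, qRe_mk, qIm_mk] <;> ring
  · intro u y z
    rw [Jform]
    ext <;> simp [qBr_mk, qRe_mk, qIm_mk] <;> ring
  · intro x1 x2 x3 x4
    simp only [Jform]
    ext <;> simp [qBr_mk, qIm_mk] <;> ring
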